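/- Let k > d ≥ 2 and let x_1 < x_2 < ... < x_k be real numbers. Suppose Q is a real polynomial of degree d that is extremal for (d, {x_1,...,x_k}). Then for any two real numbers r < r' that are consecutive roots of Q (i.e., Q(r) = Q(r') = 0 and Q has no root strictly between r and r'), there exists i ∈ {1,...,k} with r < x_i < r' and |Q(x_i)| = 1. -/

import Mathlib

/-- `Q` is extremal for `(d, {x 0, ..., x (k-1)})`: it has degree `d`, is bounded in absolute
value by `1` on the points `x i`, and its leading coefficient is maximal among all degree `d`
polynomials bounded in absolute value by `1` on the points `x i`. -/
def IsExtremal (d : ℕ) {k : ℕ} (x : Fin k → ℝ) (Q : Polynomial ℝ) : Prop :=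
  Q.natDegree = d ∧ (∀ i : Fin k, |Q.eval (x i)| ≤ 1) ∧
    ∀ R : Polynomial ℝ, R.natDegree = d → (∀ i : Fin k, |R.eval (x i)| ≤ 1) →
      R.leadingCoeff ≤ Q.leadingCoeff

open Polynomial in
theorem stmt_11 (d k : ℕ) (hd : 2 ≤ d) (hdk : d < k) (x : Fin k → ℝ) (hx : StrictMono x)
    (Q : Polynomial ℝ) (hQ : IsExtremal d x Q) :
    ∀ r r' : ℝ, r < r' → Q.IsRoot r → Q.IsRoot r' →
      (∀ t : ℝ, r < t → t < r' → ¬ Q.IsRoot t) →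
      ∃ i : Fin k, r < x i ∧ x i < r' ∧ |Q.eval (x i)| = 1 := by
  intro r r' hrr hr hr' _hcons
  by_contra hcon
  push_neg at hcon
  obtain ⟨hdeg, hbd, hmax⟩ := hQ
  have hk : 0 < k := lt_of_le_of_lt (Nat.zero_le d) hdk
  have hne : (Finset.univ : Finset (Fin k)).Nonempty := ⟨⟨0, hk⟩, Finset.mem_univ _⟩
  have hQ0 : Q ≠ 0 := by
    intro h; rw [h, natDegree_zero] at hdeg; omega
  -- leading coefficient is positive
  have hlc : 0 < Q.leadingCoeff := by
    set ε : ℝ := (1 + ∑ j, |x j ^ d|)⁻¹ with hε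
    have hsum : (0:ℝ) ≤ ∑ j, |x j ^ d| := Finset.sum_nonneg fun j _ => abs_nonneg _
    have hεpos : 0 < ε := by positivity
    have h1 : (C ε * X ^ d : Polynomial ℝ).natDegree = d := by
      rw [natDegree_C_mul (ne_of_gt hεpos), natDegree_X_pow]
    have h2 : ∀ i : Fin k, |(C ε * X ^ d : Polynomial ℝ).eval (x i)| ≤ 1 := by
      intro i
      have h3 : |x i ^ d| ≤ 1 + ∑ j, |x j ^ d| := by
        have := Finset.single_le_sum (f := fun j => |x j ^ d|)
          (fun j _ => abs_nonneg _) (Finset.mem_univ i)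
        linarith
      have h4 : (0:ℝ) < 1 + ∑ j, |x j ^ d| := by linarith
      simp only [eval_mul, eval_C, eval_pow, eval_X, abs_mul, abs_of_pos hεpos]
      rw [hε]
      calc (1 + ∑ j, |x j ^ d|)⁻¹ * |x i ^ d|
          ≤ (1 + ∑ j, |x j ^ d|)⁻¹ * (1 + ∑ j, |x j ^ d|) :=
            mul_le_mul_of_nonneg_left h3 (le_of_lt hεpos)
        _ = 1 := inv_mul_cancel₀ (ne_of_gt h4)
    have := hmax _ h1 h2
    have hlcε : (C ε * X ^ d : Polynomial ℝ).leadingCoeff = ε := by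
      rw [leadingCoeff_mul, leadingCoeff_C, leadingCoeff_X_pow, mul_one]
    rw [hlcε] at this
    linarith
  -- factor Q = (X - C r) * (X - C r') * g
  obtain ⟨Q1, hQ1⟩ := (dvd_iff_isRoot).mpr hr
  have hr'1 : Q1.IsRoot r' := by
    have := hr'
    rw [IsRoot, hQ1, eval_mul, eval_sub, eval_X, eval_C] at this
    rcases mul_eq_zero.mp this with h | h
    · exfalso; have : r' - r ≠ 0 := sub_ne_zero.mpr (ne_of_gt hrr); exact this h
    · exact h
  obtain ⟨g, hg⟩ := (dvd_iff_isRoot).mpr hr'1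
  have hQfac : Q = (X - C r) * (X - C r') * g := by rw [hQ1, hg, mul_assoc]
  have hg0 : g ≠ 0 := by
    intro h; rw [h, mul_zero] at hQfac; exact hQ0 hQfac
  have hXr : (X - C r : Polynomial ℝ) ≠ 0 := X_sub_C_ne_zero r
  have hXr' : (X - C r' : Polynomial ℝ) ≠ 0 := X_sub_C_ne_zero r'
  have hgdeg : g.natDegree = d - 2 := by
    have : Q.natDegree = ((X - C r) * (X - C r')).natDegree + g.natDegree := by
      rw [hQfac, natDegree_mul (mul_ne_zero hXr hXr') hg0]
    rw [natDegree_mul hXr hXr', natDegree_X_sub_C, natDegree_X_sub_C, hdeg] at this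
    omega
  have heval : ∀ y : ℝ, Q.eval y = (y - r) * (y - r') * g.eval y := by
    intro y; rw [hQfac]; simp [eval_mul]
  -- choose perturbation size
  set b : Fin k → ℝ := fun i =>
    if |Q.eval (x i)| = 1 then (x i - r) * (x i - r')
    else (1 - |Q.eval (x i)|) / (|g.eval (x i)| + 1) with hb
  have hbpos : ∀ i, 0 < b i := by
    intro i
    rw [hb]
    by_cases h1 : |Q.eval (x i)| = 1
    · simp only [h1, if_true]
      have hxine : Q.eval (x i) ≠ 0 := by
        intro h; rw [h, abs_zero] at h1; norm_num at h1
      have hnot : ¬ (r < x i ∧ x i < r') := by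
        intro ⟨ha, hb'⟩
        rcases hcon i ha hb' with h
        exact h h1
      rcases lt_trichotomy (x i) r with h | h | h
      · have : x i - r < 0 := by linarith
        have : x i - r' < 0 := by linarith
        nlinarith
      · exfalso; apply hxine; rw [heval, h]; ring
      · rcases lt_trichotomy (x i) r' with h2 | h2 | h2
        · exact absurd ⟨h, h2⟩ hnot
        · exfalso; apply hxine; rw [heval, h2]; ring
        · have : 0 < x i - r := by linarith
          have : 0 < x i - r' := by linarith
          nlinarith
    · simp only [h1, if_false]
      have := hbd i
      have h2 : |Q.eval (x i)| < 1 := lt_of_le_of_ne this h1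
      have h3 : (0:ℝ) < |g.eval (x i)| + 1 := by
        have := abs_nonneg (g.eval (x i)); linarith
      exact div_pos (by linarith) h3
  set m : ℝ := Finset.univ.inf' hne b with hm
  have hmpos : 0 < m := (Finset.lt_inf'_iff hne).mpr fun i _ => hbpos i
  set t : ℝ := -(m / 2) with ht
  have htneg : t < 0 := by rw [ht]; linarith
  have htb : ∀ i, -(b i) < t := by
    intro i
    have : m ≤ b i := Finset.inf'_le b (Finset.mem_univ i)
    rw [ht]; linarith
  -- the perturbed polynomial
  set R : Polynomial ℝ := Q + C t * g with hR
  have hRev : ∀ y : ℝ, R.eval y = Q.eval y + t * g.eval y := by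
    intro y; rw [hR]; simp [eval_add, eval_mul]
  have hRlt : ∀ i : Fin k, |R.eval (x i)| < 1 := by
    intro i
    rw [hRev]
    by_cases h1 : |Q.eval (x i)| = 1
    · have hxine : Q.eval (x i) ≠ 0 := by
        intro h; rw [h, abs_zero] at h1; norm_num at h1
      have hgne : g.eval (x i) ≠ 0 := by
        intro h; apply hxine; rw [heval, h]; ring
      have hbi : b i = (x i - r) * (x i - r') := by
        rw [hb]; simp only [h1, if_true]
      have hPpos : 0 < (x i - r) * (x i - r') := by
        have := hbpos i; rw [hbi] at this; exact this
      have key : Q.eval (x i) + t * g.eval (x i)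
          = g.eval (x i) * ((x i - r) * (x i - r') + t) := by
        rw [heval]; ring
      rw [key, abs_mul]
      have ht1 : 0 < (x i - r) * (x i - r') + t := by
        have := htb i; rw [hbi] at this; linarith
      have ht2 : (x i - r) * (x i - r') + t < (x i - r) * (x i - r') := by linarith
      have : |(x i - r) * (x i - r') + t| < (x i - r) * (x i - r') := by
        rw [abs_of_pos ht1]; exact ht2
      have hgpos : 0 < |g.eval (x i)| := abs_pos.mpr hgne
      calc |g.eval (x i)| * |(x i - r) * (x i - r') + t|
          < |g.eval (x i)| * ((x i - r) * (x i - r')) :=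
            mul_lt_mul_of_pos_left this hgpos
        _ = |g.eval (x i) * ((x i - r) * (x i - r'))| := by
            rw [abs_mul, abs_of_pos hPpos]
        _ = |Q.eval (x i)| := by rw [heval]; ring_nf
        _ = 1 := h1
    · have h2 : |Q.eval (x i)| < 1 := lt_of_le_of_ne (hbd i) h1
      have hbi : b i = (1 - |Q.eval (x i)|) / (|g.eval (x i)| + 1) := by
        rw [hb]; simp only [h1, if_false]
      have h3 : (0:ℝ) < |g.eval (x i)| + 1 := by
        have := abs_nonneg (g.eval (x i)); linarith
      have htabs : |t| < b i := by
        have h4 := htb i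
        have h5 := hbpos i
        rw [abs_of_neg htneg]; linarith
      have h6 : |t| * |g.eval (x i)| < 1 - |Q.eval (x i)| := by
        have h7 : |t| * (|g.eval (x i)| + 1) < b i * (|g.eval (x i)| + 1) :=
          mul_lt_mul_of_pos_right htabs h3
        rw [hbi, div_mul_cancel₀ _ (ne_of_gt h3)] at h7
        nlinarith [abs_nonneg t, abs_nonneg (g.eval (x i))]
      calc |Q.eval (x i) + t * g.eval (x i)|
          ≤ |Q.eval (x i)| + |t * g.eval (x i)| := abs_add_le _ _
        _ = |Q.eval (x i)| + |t| * |g.eval (x i)| := by rw [abs_mul]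
        _ < 1 := by linarith
  -- degree and leading coefficient of R
  have hdegCtg : (C t * g).degree < Q.degree := by
    calc (C t * g).degree ≤ g.degree := by
          apply le_trans (degree_mul_le _ _)
          have : (C t).degree ≤ 0 := degree_C_le
          rcases le_or_gt (C t).degree 0 with h | h
          · calc (C t).degree + g.degree ≤ 0 + g.degree := add_le_add_left h _
              _ = g.degree := zero_add _
          · exact absurd h (not_lt.mpr degree_C_le)
      _ < Q.degree := by
          apply degree_lt_degree
          rw [hgdeg, hdeg]; omega
  have hRdeg : R.natDegree = d := by
    rw [hR, natDegree_add_eq_left_of_degree_lt hdegCtg, hdeg]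
  have hRlc : R.leadingCoeff = Q.leadingCoeff := by
    rw [hR, leadingCoeff_add_of_degree_lt' hdegCtg]
  -- rescale
  set M : ℝ := Finset.univ.sup' hne (fun i => |R.eval (x i)|) with hM
  have hMlt : M < 1 := (Finset.sup'_lt_iff hne).mpr fun i _ => hRlt i
  set c : ℝ := max M (1/2) with hc
  have hcpos : 0 < c := lt_of_lt_of_le (by norm_num) (le_max_right _ _)
  have hclt : c < 1 := by
    rw [hc]; apply max_lt hMlt; norm_num
  set R' : Polynomial ℝ := C c⁻¹ * R with hR'
  have hR'deg : R'.natDegree = d := by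
    rw [hR', natDegree_C_mul (inv_ne_zero (ne_of_gt hcpos)), hRdeg]
  have hR'bd : ∀ i : Fin k, |R'.eval (x i)| ≤ 1 := by
    intro i
    rw [hR']
    simp only [eval_mul, eval_C, abs_mul]
    have h1 : |R.eval (x i)| ≤ M :=
      Finset.le_sup' (fun i => |R.eval (x i)|) (Finset.mem_univ i)
    have h2 : M ≤ c := le_max_left _ _
    rw [abs_of_pos (inv_pos.mpr hcpos)]
    calc c⁻¹ * |R.eval (x i)| ≤ c⁻¹ * c := by
          apply mul_le_mul_of_nonneg_left (le_trans h1 h2) (le_of_lt (inv_pos.mpr hcpos))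
      _ = 1 := inv_mul_cancel₀ (ne_of_gt hcpos)
  have hR'lc : R'.leadingCoeff = c⁻¹ * Q.leadingCoeff := by
    rw [hR', leadingCoeff_mul, leadingCoeff_C, hRlc]
  have hfinal := hmax R' hR'deg hR'bd
  rw [hR'lc] at hfinal
  have h2 := mul_le_mul_of_nonneg_left hfinal (le_of_lt hcpos)
  rw [← mul_assoc, mul_inv_cancel₀ (ne_of_gt hcpos), one_mul] at h2
  nlinarith
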